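/- Assume in addition that Δ_k ≠ 0 for all k ≥ 1. Then for every n ≥ 1 the relation P_n(a_n) · P_n(b_n) = (Δ_n/Δ_{n+1}) · κ_n · (1 − κ_n/κ_{n−1}) holds. -/

import Mathlib

open Polynomial

/-- `Apoly a n = ∏_{k=1}^n (z - a_k)`. -/
noncomputable def Apoly (a : ℕ → ℂ) (n : ℕ) : Polynomial ℂ :=
  ∏ k ∈ Finset.range n, (X - C (a (k + 1)))

/-- Moments `c_{nm} = σ(1/(A_n B_m))`. -/
noncomputable def momC (σ : RatFunc ℂ →ₗ[ℂ] ℂ) (a b : ℕ → ℂ) (n m : ℕ) : ℂ :=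
  σ (1 / algebraMap (Polynomial ℂ) (RatFunc ℂ) (Apoly a n * Apoly b m))

/-- `Δ_0 = 1`, `Δ_n = det (c_{ij})_{0 ≤ i,j ≤ n-1}`. -/
noncomputable def DeltaDet (σ : RatFunc ℂ →ₗ[ℂ] ℂ) (a b : ℕ → ℂ) (n : ℕ) : ℂ :=
  Matrix.det (Matrix.of fun i j : Fin n => momC σ a b (i : ℕ) (j : ℕ))

section BiorAux

open Matrix Finset




/-- Half lemma: `κ' * (det M * w_last) = -κ * α * det N`. -/
lemma bior_half {m : ℕ} (M : Matrix (Fin (m+2)) (Fin (m+2)) ℂ) (κ κ' : ℂ)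
    (w : Fin (m+2) → ℂ) (y' w' : Fin (m+1) → ℂ)
    (hw : ∀ i : Fin (m+2), ∑ j, M i j * w j = if i = 0 then κ else 0)
    (hy' : ∀ j : Fin (m+1), ∑ i, y' i * M i.castSucc j.castSucc = if j = 0 then κ' else 0)
    (hy0' : y' 0 = 1)
    (hw' : ∀ i : Fin (m+1), ∑ j, M i.castSucc j.castSucc * w' j = if i = 0 then κ' else 0)
    (hw0' : w' 0 = 1) :
    κ' * (M.det * w (Fin.last _)) =
      -κ * (∑ j, M (Fin.last _) j.castSucc * w' j) *
        (M.submatrix Fin.castSucc Fin.castSucc).det := by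
  classical
  set α : ℂ := ∑ j, M (Fin.last _) j.castSucc * w' j with hα
  -- interior determinant
  set I : Matrix (Fin m) (Fin m) ℂ :=
    Matrix.of (fun i j : Fin m => M i.succ.castSucc j.succ.castSucc) with hI
  -- Step A : det N = κ' * det I
  have hN : (M.submatrix Fin.castSucc Fin.castSucc).det = κ' * I.det := by
    set N := M.submatrix (Fin.castSucc (n := m+1)) Fin.castSucc with hNdef
    have h1 : N.det = (N.updateRow 0 (∑ k, y' k • N k)).det := by
      rw [det_updateRow_sum N 0 y']
      simp [hy0']
    have hvec : (∑ k, y' k • N k) = Pi.single 0 κ' := by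
      funext j
      have h3 : (∑ k, y' k • N k) j = ∑ k, y' k * N k j := by
        simp [Finset.sum_apply]
      rw [h3]
      have h4 := hy' j
      simp only [hNdef, submatrix_apply] at h4 ⊢
      rw [h4]
      by_cases hj : j = 0 <;> simp [hj, Pi.single_apply]
    have hsub : ((N.updateRow 0 (Pi.single 0 κ')).submatrix Fin.succ
        ((0:Fin (m+1)).succAbove)) = I := by
      rw [show ((0:Fin (m+1)).succAbove) = Fin.succ from Fin.succAbove_zero]
      funext i j
      simp only [submatrix_apply, updateRow_apply, hNdef, hI, Matrix.of_apply]
      rw [if_neg (Fin.succ_ne_zero i)]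
    rw [h1, hvec, det_succ_row_zero, Finset.sum_eq_single 0]
    · rw [hsub]
      simp [updateRow_self]
    · intro j _ hj
      simp [updateRow_self, Pi.single_eq_of_ne hj]
    · simp
  -- Step B : Cramer : det M * w last = κ * adjugate M last 0
  have hCramer : M.det • w = M.adjugate *ᵥ (fun i => if i = 0 then κ else 0) := by
    have hb : M *ᵥ w = (fun i => if i = 0 then κ else 0) := by
      funext i; simpa [Matrix.mulVec, dotProduct] using hw i
    calc M.det • w = (M.det • (1 : Matrix _ _ ℂ)) *ᵥ w := by
          simp [Matrix.smul_mulVec]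
      _ = (M.adjugate * M) *ᵥ w := by rw [Matrix.adjugate_mul]
      _ = M.adjugate *ᵥ (M *ᵥ w) := by rw [Matrix.mulVec_mulVec]
      _ = _ := by rw [hb]
  have hwlast : M.det * w (Fin.last _) = κ * M.adjugate (Fin.last _) 0 := by
    have h5 := congrFun hCramer (Fin.last _)
    simp only [Pi.smul_apply, smul_eq_mul] at h5
    rw [h5, Matrix.mulVec, dotProduct, Finset.sum_eq_single 0]
    · simp [mul_comm]
    · intro j _ hj; simp [hj]
    · simp
  -- Step C : adjugate M last 0 = det (updateRow M 0 (single last 1))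
  have hAdj : M.adjugate (Fin.last _) 0 =
      (M.updateRow 0 (Pi.single (Fin.last _) 1)).det := Matrix.adjugate_apply M _ _
  -- Step D : expand that determinant along row 0
  set K : Matrix (Fin (m+1)) (Fin (m+1)) ℂ :=
    Matrix.of (fun i j : Fin (m+1) => M i.succ j.castSucc) with hK
  have hD : (M.updateRow 0 (Pi.single (Fin.last (m+1)) 1)).det = (-1)^(m+1) * K.det := by
    have hsub : ((M.updateRow 0 (Pi.single (Fin.last (m+1)) 1)).submatrix Fin.succ
        ((Fin.last (m+1)).succAbove)) = K := by
      rw [show ((Fin.last (m+1)).succAbove) = Fin.castSucc from Fin.succAbove_last]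
      funext i j
      simp only [submatrix_apply, updateRow_apply, hK, Matrix.of_apply]
      rw [if_neg (Fin.succ_ne_zero i)]
    rw [det_succ_row_zero, Finset.sum_eq_single (Fin.last (m+1)), hsub]
    · simp [updateRow_self]
    · intro j _ hj
      simp [updateRow_self, Pi.single_eq_of_ne hj]
    · simp
  -- Step E : column operation on K : det K = det (K with col 0 := single last α)
  have hE : K.det = (K.updateCol 0 (Pi.single (Fin.last m) α)).det := by
    have h6 : (K.updateCol 0 (fun i => ∑ k, w' k * K i k)).det = w' 0 • K.det := by
      have := Matrix.det_updateCol_sum K 0 w'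
      convert this using 3
      simp only [smul_eq_mul]

    have h7 : (fun i => ∑ k, w' k * K i k) = Pi.single (Fin.last m) α := by
      funext i
      rcases Fin.eq_castSucc_or_eq_last i with ⟨i', rfl⟩ | rfl
      · -- i.succ = (i'+1).castSucc  with i'+1 ≠ 0
        have h8 : (Fin.castSucc i').succ = (i'.succ).castSucc := Fin.succ_castSucc i'
        have h9 : ∑ k, w' k * K (Fin.castSucc i') k
            = ∑ k, M (i'.succ).castSucc k.castSucc * w' k := by
          refine Finset.sum_congr rfl fun k _ => ?_
          simp only [hK, Matrix.of_apply, h8]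
          ring
        rw [h9, hw' i'.succ, if_neg (Fin.succ_ne_zero i')]
        rw [Pi.single_eq_of_ne]
        exact fun h => (Fin.castSucc_lt_last i').ne h
      · have h9 : ∑ k, w' k * K (Fin.last m) k = α := by
          rw [hα]
          refine Finset.sum_congr rfl fun k _ => ?_
          simp only [hK, Matrix.of_apply, Fin.succ_last]
          ring
        rw [h9, Pi.single_eq_same]
    rw [← h7] at *
    rw [h6, hw0', one_smul]
  -- Step F : expand along column 0
  have hF : (K.updateCol 0 (Pi.single (Fin.last m) α)).det = (-1)^m * α * I.det := by
    have hsub : ((K.updateCol 0 (Pi.single (Fin.last m) α)).submatrix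
        ((Fin.last m).succAbove) Fin.succ) = I := by
      rw [show ((Fin.last m).succAbove) = Fin.castSucc from Fin.succAbove_last]
      funext i j
      simp only [submatrix_apply, hK, hI, Matrix.of_apply, updateCol_apply]
      rw [if_neg (Fin.succ_ne_zero j)]
      rw [Fin.succ_castSucc]
    rw [det_succ_column_zero, Finset.sum_eq_single (Fin.last m), hsub]
    · simp [updateCol_self, mul_assoc]
    · intro i _ hi
      simp [updateCol_self, Pi.single_eq_of_ne hi]
    · simp
  -- Combine
  have hIdet : κ' * I.det = (M.submatrix Fin.castSucc Fin.castSucc).det := hN.symm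
  calc κ' * (M.det * w (Fin.last _))
      = κ' * (κ * ((-1)^(m+1) * ((-1)^m * α * I.det))) := by
        rw [hwlast, hAdj, hD, hE, hF]
    _ = -κ * α * (κ' * I.det) := by
        have hsign : ((-1:ℂ))^(m+1) * (-1)^m = -1 := by
          rw [← pow_add]; exact Odd.neg_one_pow ⟨m, by ring⟩
        calc κ' * (κ * ((-1)^(m+1) * ((-1)^m * α * I.det)))
            = (((-1:ℂ))^(m+1) * (-1)^m) * (κ' * (κ * (α * I.det))) := by ring
          _ = -κ * α * (κ' * I.det) := by rw [hsign]; ring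
    _ = -κ * α * (M.submatrix Fin.castSucc Fin.castSucc).det := by rw [hIdet]



/-- Key I : `κ = κ' + β * w_last`. -/
lemma bior_keyI {m : ℕ} (M : Matrix (Fin (m+2)) (Fin (m+2)) ℂ) (κ κ' : ℂ)
    (w : Fin (m+2) → ℂ) (y' : Fin (m+1) → ℂ)
    (hw : ∀ i : Fin (m+2), ∑ j, M i j * w j = if i = 0 then κ else 0)
    (hw0 : w 0 = 1)
    (hy' : ∀ j : Fin (m+1), ∑ i, y' i * M i.castSucc j.castSucc = if j = 0 then κ' else 0)
    (hy0' : y' 0 = 1) :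
    κ = κ' + (∑ i, y' i * M i.castSucc (Fin.last _)) * w (Fin.last _) := by
  have h1 : ∑ i : Fin (m+1), y' i * (∑ j, M i.castSucc j * w j) = κ := by
    rw [Finset.sum_eq_single 0]
    · rw [show ((0:Fin (m+1)).castSucc) = 0 from rfl, hw 0, if_pos rfl, hy0', one_mul]
    · intro i _ hi
      rw [hw i.castSucc, if_neg (by simpa using hi), mul_zero]
    · simp
  have h2 : ∀ i : Fin (m+1), y' i * (∑ j, M i.castSucc j * w j)
      = (∑ j : Fin (m+1), y' i * M i.castSucc j.castSucc * w j.castSucc)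
        + y' i * M i.castSucc (Fin.last _) * w (Fin.last _) := by
    intro i
    rw [Fin.sum_univ_castSucc (f := fun j => M i.castSucc j * w j), mul_add, Finset.mul_sum]
    ring_nf
  rw [Finset.sum_congr rfl (fun i _ => h2 i)] at h1
  rw [Finset.sum_add_distrib] at h1
  rw [Finset.sum_comm] at h1
  have h3 : ∀ j : Fin (m+1), ∑ i : Fin (m+1), y' i * M i.castSucc j.castSucc * w j.castSucc
      = (if j = 0 then κ' else 0) * w j.castSucc := by
    intro j
    rw [← Finset.sum_mul, hy' j]
  rw [Finset.sum_congr rfl (fun j _ => h3 j)] at h1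
  have h4 : ∑ j : Fin (m+1), (if j = 0 then κ' else 0) * w j.castSucc = κ' := by
    rw [Finset.sum_eq_single 0]
    · simp [hw0]
    · intro j _ hj; simp [hj]
    · simp
  rw [h4, ← Finset.sum_mul] at h1
  exact h1.symm



lemma bior_core {m : ℕ} (M : Matrix (Fin (m+2)) (Fin (m+2)) ℂ) (κ κ' : ℂ)
    (y w : Fin (m+2) → ℂ) (y' w' : Fin (m+1) → ℂ)
    (hκ : κ ≠ 0) (hκ' : κ' ≠ 0) (hd : M.det ≠ 0)
    (hy : ∀ j : Fin (m+2), ∑ i, y i * M i j = if j = 0 then κ else 0) (hy0 : y 0 = 1)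
    (hw : ∀ i : Fin (m+2), ∑ j, M i j * w j = if i = 0 then κ else 0) (hw0 : w 0 = 1)
    (hy' : ∀ j : Fin (m+1), ∑ i, y' i * M i.castSucc j.castSucc = if j = 0 then κ' else 0)
    (hy0' : y' 0 = 1)
    (hw' : ∀ i : Fin (m+1), ∑ j, M i.castSucc j.castSucc * w' j = if i = 0 then κ' else 0)
    (hw0' : w' 0 = 1) :
    y (Fin.last _) * w (Fin.last _) * κ' * M.det
      = κ * (κ' - κ) * (M.submatrix Fin.castSucc Fin.castSucc).det := by
  classical
  set α : ℂ := ∑ j, M (Fin.last _) j.castSucc * w' j with hα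
  set β : ℂ := ∑ i, y' i * M i.castSucc (Fin.last _) with hβ
  set d : ℂ := M.det with hdd
  set e : ℂ := (M.submatrix Fin.castSucc Fin.castSucc).det with hee
  set yl : ℂ := y (Fin.last _)
  set wl : ℂ := w (Fin.last _)
  -- (I)
  have hI : κ = κ' + β * wl := bior_keyI M κ κ' w y' hw hw0 hy' hy0'
  -- transposed hypotheses
  have thy : ∀ i : Fin (m+2), ∑ j, Mᵀ i j * y j = if i = 0 then κ else 0 := by
    intro i
    rw [← hy i]
    exact Finset.sum_congr rfl fun j _ => mul_comm _ _
  have thw' : ∀ j : Fin (m+1), ∑ i, w' i * Mᵀ i.castSucc j.castSucc = if j = 0 then κ' else 0 := by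
    intro j
    rw [← hw' j]
    exact Finset.sum_congr rfl fun i _ => mul_comm _ _
  have thy' : ∀ i : Fin (m+1), ∑ j, Mᵀ i.castSucc j.castSucc * y' j = if i = 0 then κ' else 0 := by
    intro i
    rw [← hy' i]
    exact Finset.sum_congr rfl fun j _ => mul_comm _ _
  -- (II) via transpose
  have hII : κ = κ' + α * yl := by
    have h := bior_keyI Mᵀ κ κ' y w' thy hy0 thw' hw0'
    rw [h]
    congr 2
    rw [hα]
    exact Finset.sum_congr rfl fun i _ => mul_comm _ _
  -- (III)
  have hIII : κ' * (d * wl) = -κ * α * e := bior_half M κ κ' w y' w' hw hy' hy0' hw' hw0'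
  -- (IV) via transpose
  have hIV : κ' * (d * yl) = -κ * β * e := by
    have h := bior_half Mᵀ κ κ' y w' y' thy thw' hw0' thy' hy0'
    rw [Matrix.det_transpose] at h
    have hβ' : (∑ j : Fin (m+1), Mᵀ (Fin.last _) j.castSucc * y' j) = β := by
      rw [hβ]; exact Finset.sum_congr rfl fun j _ => mul_comm _ _
    have he' : ((Mᵀ).submatrix Fin.castSucc Fin.castSucc).det = e := by
      rw [hee, ← Matrix.det_transpose (M.submatrix Fin.castSucc Fin.castSucc)]
      congr 1
    rw [hβ', he'] at h
    exact h
  -- combine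
  have hβw : β * wl = κ - κ' := by rw [hI]; ring
  have hαy : α * yl = κ - κ' := by rw [hII]; ring
  -- E1 : κ * (α*β) * e = -κ' * d * (κ - κ')
  have hE1 : κ * (α * β) * e = -(κ' * d * (κ - κ')) := by
    have h := congrArg (fun x => x * β) hIII
    -- κ' * (d * wl) * β = -κ * α * e * β
    have : κ' * d * (β * wl) = -κ * (α * β) * e := by linear_combination h
    rw [hβw] at this
    linear_combination this
  -- multiply III and IV
  have hIIIIV : (κ' * d) * (κ' * d) * (yl * wl) = (κ * (α*β) * e) * (κ * e) := by
    linear_combination (κ' * d * yl) * hIII + (-κ * α * e) * hIV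
  rw [hE1] at hIIIIV
  -- cancel κ' * d
  have hcd : κ' * d ≠ 0 := mul_ne_zero hκ' hd
  have : (κ' * d) * ((κ' * d) * (yl * wl)) = (κ' * d) * (-(κ - κ') * (κ * e)) := by
    linear_combination hIIIIV
  have h9 := mul_left_cancel₀ hcd this
  -- goal : yl * wl * κ' * d = κ * (κ' - κ) * e
  linear_combination h9



/-- Newton-type expansion in the basis `∏_{m∈Ico k n} (X - C (a (m+1)))`. -/
lemma bior_expand (a : ℕ → ℂ) : ∀ (n : ℕ) (Q : Polynomial ℂ), Q.Monic → Q.natDegree = n →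
    ∃ d : ℕ → ℂ, d 0 = 1 ∧ d n = Q.eval (a n) ∧
      Q = ∑ k ∈ Finset.range (n+1),
        Polynomial.C (d k) * ∏ m ∈ Finset.Ico k n, (X - Polynomial.C (a (m+1))) := by
  intro n
  induction n with
  | zero =>
    intro Q hQ hdeg
    have h1 : Q = 1 := (Polynomial.Monic.natDegree_eq_zero hQ).mp hdeg
    exact ⟨fun _ => 1, rfl, by simp [h1], by simp [h1]⟩
  | succ n ih =>
    intro Q hQ hdeg
    set r := a (n+1) with hr
    set T := Q /ₘ (X - Polynomial.C r) with hT
    set c := Q.eval r with hc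
    have hQT : Q = (X - Polynomial.C r) * T + Polynomial.C c := by
      conv_lhs => rw [← Polynomial.modByMonic_add_div Q (X - Polynomial.C r)]
      rw [Polynomial.modByMonic_X_sub_C_eq_C_eval]
      ring
    have hTdeg : T.natDegree = n := by
      rw [hT, Polynomial.natDegree_divByMonic Q (Polynomial.monic_X_sub_C r),
        Polynomial.natDegree_X_sub_C, hdeg]
      omega
    have hTmonic : T.Monic := by
      have hd : (X - Polynomial.C r).degree ≤ Q.degree := by
        rw [Polynomial.degree_X_sub_C, Polynomial.degree_eq_natDegree hQ.ne_zero, hdeg]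
        exact_mod_cast Nat.one_le_iff_ne_zero.mpr (Nat.succ_ne_zero n)
      have := Polynomial.leadingCoeff_divByMonic_of_monic (Polynomial.monic_X_sub_C r) hd
      rw [Polynomial.Monic, this]
      exact hQ
    obtain ⟨t, ht0, _, htexp⟩ := ih T hTmonic hTdeg
    refine ⟨fun k => if k = n+1 then c else t k, by simp [ht0], by simp, ?_⟩
    rw [Finset.sum_range_succ]
    have h2 : ∀ k ∈ Finset.range (n+1),
        Polynomial.C (if k = n+1 then c else t k) * ∏ m ∈ Finset.Ico k (n+1),
          (X - Polynomial.C (a (m+1)))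
        = (Polynomial.C (t k) * ∏ m ∈ Finset.Ico k n, (X - Polynomial.C (a (m+1))))
            * (X - Polynomial.C r) := by
      intro k hk
      have hk' : k ≤ n := Nat.lt_succ_iff.mp (Finset.mem_range.mp hk)
      rw [if_neg (by omega), Finset.prod_Ico_succ_top hk']
      ring
    rw [Finset.sum_congr rfl h2, ← Finset.sum_mul, ← htexp]
    simp [hQT]
    ring



lemma Apoly_monic (a : ℕ → ℂ) (n : ℕ) : (Apoly a n).Monic :=
  monic_prod_of_monic _ _ (fun i _ => monic_X_sub_C _)

lemma Rname_monic (c : ℕ → ℂ) (k n : ℕ) :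
    (∏ m ∈ Finset.Ico k n, (X - C (c (m + 1)))).Monic :=
  monic_prod_of_monic _ _ (fun i _ => monic_X_sub_C _)

lemma Rname_natDegree (c : ℕ → ℂ) (k n : ℕ) (h : k ≤ n) :
    (∏ m ∈ Finset.Ico k n, (X - C (c (m + 1)))).natDegree = n - k := by
  rw [Polynomial.natDegree_prod _ _ (fun i _ => X_sub_C_ne_zero _)]
  simp [Polynomial.natDegree_X_sub_C, Nat.card_Ico]

lemma Apoly_split (c : ℕ → ℂ) (k n : ℕ) (h : k ≤ n) :
    Apoly c n = Apoly c k * ∏ m ∈ Finset.Ico k n, (X - C (c (m + 1))) := by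
  rw [Apoly, Apoly, Finset.prod_range_mul_prod_Ico _ h]

lemma bior_rowSum (σ : RatFunc ℂ →ₗ[ℂ] ℂ) (a b : ℕ → ℂ) (Q : Polynomial ℂ) (κn : ℂ)
    (n j : ℕ) (hj : j ≤ n) (d : ℕ → ℂ)
    (hσn : ∀ q : Polynomial ℂ, q.degree ≤ (n : ℕ) →
      σ (algebraMap (Polynomial ℂ) (RatFunc ℂ) (Q * q) /
          algebraMap (Polynomial ℂ) (RatFunc ℂ) (Apoly a n * Apoly b n)) = q.coeff n * κn)
    (hexp : Q = ∑ k ∈ Finset.range (n+1),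
        C (d k) * ∏ m ∈ Finset.Ico k n, (X - C (a (m+1)))) :
    ∑ k ∈ Finset.range (n+1),
        d k * σ (1 / algebraMap (Polynomial ℂ) (RatFunc ℂ) (Apoly a k * Apoly b j))
      = if j = 0 then κn else 0 := by
  set φ := algebraMap (Polynomial ℂ) (RatFunc ℂ) with hφ
  have hφne : ∀ p : Polynomial ℂ, p.Monic → φ p ≠ 0 := fun p hp =>
    RatFunc.algebraMap_ne_zero hp.ne_zero
  -- step 1: each term
  have hterm : ∀ k, k ≤ n →
      d k * σ (1 / φ (Apoly a k * Apoly b j))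
        = σ (φ (C (d k) * ∏ m ∈ Finset.Ico k n, (X - C (a (m+1)))) /
            φ (Apoly a n * Apoly b j)) := by
    intro k hk
    have hsmul : d k * σ (1 / φ (Apoly a k * Apoly b j))
        = σ (φ (C (d k)) * (1 / φ (Apoly a k * Apoly b j))) := by
      have h0 : φ (C (d k)) * (1 / φ (Apoly a k * Apoly b j))
          = d k • (1 / φ (Apoly a k * Apoly b j)) := by
        rw [Algebra.smul_def, IsScalarTower.algebraMap_apply ℂ (Polynomial ℂ) (RatFunc ℂ)]
        rw [Polynomial.algebraMap_eq]
      rw [h0, _root_.map_smul σ, smul_eq_mul]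
    rw [hsmul]
    congr 1
    set R := ∏ m ∈ Finset.Ico k n, (X - C (a (m+1))) with hR
    rw [Apoly_split a k n hk, ← hR]
    have h1 : φ (Apoly a k) ≠ 0 := hφne _ (Apoly_monic a k)
    have h2 : φ R ≠ 0 := hφne _ (Rname_monic a k n)
    have h3 : φ (Apoly b j) ≠ 0 := hφne _ (Apoly_monic b j)
    simp only [_root_.map_mul]
    field_simp
  rw [Finset.sum_congr rfl (fun k hk => hterm k (Nat.lt_succ_iff.mp (Finset.mem_range.mp hk)))]
  -- step 2: pull sum inside σ
  rw [← map_sum σ]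
  have hsum : ∑ k ∈ Finset.range (n+1),
      φ (C (d k) * ∏ m ∈ Finset.Ico k n, (X - C (a (m+1)))) / φ (Apoly a n * Apoly b j)
      = φ Q / φ (Apoly a n * Apoly b j) := by
    rw [← Finset.sum_div, ← map_sum φ, ← hexp]
  rw [hsum]
  -- step 3: rewrite as the hσ form
  set qb := ∏ m ∈ Finset.Ico j n, (X - C (b (m+1))) with hqb
  have hBsplit : Apoly b n = Apoly b j * qb := Apoly_split b j n hj
  have hqbne : φ qb ≠ 0 := hφne _ (Rname_monic b j n)
  have h3 : φ (Apoly b j) ≠ 0 := hφne _ (Apoly_monic b j)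
  have h4 : φ (Apoly a n) ≠ 0 := hφne _ (Apoly_monic a n)
  have hform : φ Q / φ (Apoly a n * Apoly b j)
      = φ (Q * qb) / φ (Apoly a n * Apoly b n) := by
    rw [hBsplit]
    set A := Apoly a n
    set Bj := Apoly b j
    simp only [_root_.map_mul]
    field_simp
  rw [hform, hσn qb]
  · -- coefficient computation
    have hqdeg : qb.natDegree = n - j := Rname_natDegree b j n hj
    by_cases hj0 : j = 0
    · subst hj0
      rw [if_pos rfl]
      have : qb.coeff n = 1 := by
        have := (Rname_monic b 0 n).coeff_natDegree
        rwa [hqdeg, Nat.sub_zero] at this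
      rw [this, one_mul]
    · rw [if_neg hj0]
      have hlt : qb.natDegree < n := by omega
      rw [Polynomial.coeff_eq_zero_of_natDegree_lt hlt, zero_mul]
  · -- degree bound
    refine le_trans Polynomial.degree_le_natDegree ?_
    rw [Rname_natDegree b j n hj]
    exact_mod_cast Nat.cast_le.mpr (Nat.sub_le n j)


end BiorAux

/-- The relation `P_n(a_n) P_n(b_n) = (Δ_n/Δ_{n+1}) κ_n (1 - κ_n/κ_{n-1})`. -/
theorem stmt3 (a b : ℕ → ℂ) (P : ℕ → Polynomial ℂ) (κ : ℕ → ℂ)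
    (σ : RatFunc ℂ →ₗ[ℂ] ℂ)
    (hP0 : P 0 = 1) (hPmonic : ∀ n, (P n).Monic) (hPdeg : ∀ n, (P n).natDegree = n)
    (hκ : ∀ n, κ n ≠ 0)
    (hσ : ∀ (n : ℕ) (q : Polynomial ℂ), q.degree ≤ (n : ℕ) →
      σ (algebraMap (Polynomial ℂ) (RatFunc ℂ) (P n * q) /
          algebraMap (Polynomial ℂ) (RatFunc ℂ) (Apoly a n * Apoly b n)) =
        q.coeff n * κ n)
    (hΔ : ∀ k, 1 ≤ k → DeltaDet σ a b k ≠ 0) :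
    ∀ n : ℕ, 1 ≤ n →
      (P n).eval (a n) * (P n).eval (b n) =
        DeltaDet σ a b n / DeltaDet σ a b (n + 1) *
          (κ n * (1 - κ n / κ (n - 1))) := by
  intro n hn
  obtain ⟨m, rfl⟩ : ∃ m, n = m + 1 := ⟨n - 1, by omega⟩
  classical
  set M : Matrix (Fin (m+2)) (Fin (m+2)) ℂ :=
    Matrix.of (fun i j : Fin (m+2) => momC σ a b (i : ℕ) (j : ℕ)) with hM
  have hdetM : DeltaDet σ a b (m+2) = M.det := rfl
  have hdetN : (M.submatrix Fin.castSucc Fin.castSucc).det = DeltaDet σ a b (m+1) := by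
    have hNN : M.submatrix Fin.castSucc Fin.castSucc
        = Matrix.of (fun i j : Fin (m+1) => momC σ a b (i : ℕ) (j : ℕ)) := by
      funext i j
      simp [hM, Matrix.submatrix_apply, Fin.coe_castSucc]
    rw [hNN]
    rfl
  -- the four expansion vectors
  obtain ⟨dy, hdy0, hdyn, hdyexp⟩ := bior_expand a (m+1) (P (m+1)) (hPmonic _) (hPdeg _)
  obtain ⟨dw, hdw0, hdwn, hdwexp⟩ := bior_expand b (m+1) (P (m+1)) (hPmonic _) (hPdeg _)
  obtain ⟨dy', hdy'0, _, hdy'exp⟩ := bior_expand a m (P m) (hPmonic _) (hPdeg _)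
  obtain ⟨dw', hdw'0, _, hdw'exp⟩ := bior_expand b m (P m) (hPmonic _) (hPdeg _)
  set y : Fin (m+2) → ℂ := fun i => dy (i : ℕ) with hy_def
  set w : Fin (m+2) → ℂ := fun i => dw (i : ℕ) with hw_def
  set y' : Fin (m+1) → ℂ := fun i => dy' (i : ℕ) with hy'_def
  set w' : Fin (m+1) → ℂ := fun i => dw' (i : ℕ) with hw'_def
  -- hσ instances
  have hσswap : ∀ (k : ℕ) (q : Polynomial ℂ), q.degree ≤ (k : ℕ) →
      σ (algebraMap (Polynomial ℂ) (RatFunc ℂ) (P k * q) /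
          algebraMap (Polynomial ℂ) (RatFunc ℂ) (Apoly b k * Apoly a k)) =
        q.coeff k * κ k := by
    intro k q hq
    rw [mul_comm (Apoly b k) (Apoly a k)]
    exact hσ k q hq
  -- row relations
  have hy : ∀ j : Fin (m+2), ∑ i, y i * M i j = if j = 0 then κ (m+1) else 0 := by
    intro j
    have hr := bior_rowSum σ a b (P (m+1)) (κ (m+1)) (m+1) (j : ℕ)
      (by omega) dy (fun q hq => hσ (m+1) q hq) hdyexp
    have hsum : ∑ i : Fin (m+2), y i * M i j
        = ∑ k ∈ Finset.range (m+2),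
            dy k * σ (1 / algebraMap (Polynomial ℂ) (RatFunc ℂ) (Apoly a k * Apoly b (j : ℕ))) := by
      rw [← Fin.sum_univ_eq_sum_range]
      rfl
    rw [hsum, hr]
    by_cases h0 : j = 0
    · rw [if_pos h0, if_pos (by simp [h0])]
    · rw [if_neg (show ¬ ((j : ℕ) = 0) from fun h => h0 (Fin.ext h)), if_neg h0]
  have hw : ∀ i : Fin (m+2), ∑ j, M i j * w j = if i = 0 then κ (m+1) else 0 := by
    intro i
    have hr := bior_rowSum σ b a (P (m+1)) (κ (m+1)) (m+1) (i : ℕ)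
      (by omega) dw (fun q hq => hσswap (m+1) q hq) hdwexp
    have hsum : ∑ j : Fin (m+2), M i j * w j
        = ∑ k ∈ Finset.range (m+2),
            dw k * σ (1 / algebraMap (Polynomial ℂ) (RatFunc ℂ) (Apoly b k * Apoly a (i : ℕ))) := by
      rw [← Fin.sum_univ_eq_sum_range]
      refine Finset.sum_congr rfl fun j _ => ?_
      show momC σ a b (i : ℕ) (j : ℕ) * dw (j : ℕ) = _
      rw [momC, mul_comm (Apoly a (i : ℕ)) (Apoly b (j : ℕ)), mul_comm]
    rw [hsum, hr]
    by_cases h0 : i = 0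
    · rw [if_pos h0, if_pos (by simp [h0])]
    · rw [if_neg (show ¬ ((i : ℕ) = 0) from fun h => h0 (Fin.ext h)), if_neg h0]
  have hy' : ∀ j : Fin (m+1), ∑ i, y' i * M i.castSucc j.castSucc
      = if j = 0 then κ m else 0 := by
    intro j
    have hr := bior_rowSum σ a b (P m) (κ m) m (j : ℕ)
      (by omega) dy' (fun q hq => hσ m q hq) hdy'exp
    have hsum : ∑ i : Fin (m+1), y' i * M i.castSucc j.castSucc
        = ∑ k ∈ Finset.range (m+1),
            dy' k * σ (1 / algebraMap (Polynomial ℂ) (RatFunc ℂ) (Apoly a k * Apoly b (j : ℕ))) := by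
      rw [← Fin.sum_univ_eq_sum_range]
      refine Finset.sum_congr rfl fun i _ => ?_
      show y' i * momC σ a b ((i.castSucc : Fin (m+2)) : ℕ) ((j.castSucc : Fin (m+2)) : ℕ) = _
      rw [Fin.coe_castSucc, Fin.coe_castSucc]
      rfl
    rw [hsum, hr]
    by_cases h0 : j = 0
    · rw [if_pos h0, if_pos (by simp [h0])]
    · rw [if_neg (show ¬ ((j : ℕ) = 0) from fun h => h0 (Fin.ext h)), if_neg h0]
  have hw' : ∀ i : Fin (m+1), ∑ j, M i.castSucc j.castSucc * w' j
      = if i = 0 then κ m else 0 := by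
    intro i
    have hr := bior_rowSum σ b a (P m) (κ m) m (i : ℕ)
      (by omega) dw' (fun q hq => hσswap m q hq) hdw'exp
    have hsum : ∑ j : Fin (m+1), M i.castSucc j.castSucc * w' j
        = ∑ k ∈ Finset.range (m+1),
            dw' k * σ (1 / algebraMap (Polynomial ℂ) (RatFunc ℂ) (Apoly b k * Apoly a (i : ℕ))) := by
      rw [← Fin.sum_univ_eq_sum_range]
      refine Finset.sum_congr rfl fun j _ => ?_
      show momC σ a b ((i.castSucc : Fin (m+2)) : ℕ) ((j.castSucc : Fin (m+2)) : ℕ) * w' j = _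
      rw [Fin.coe_castSucc, Fin.coe_castSucc, momC,
        mul_comm (Apoly a (i : ℕ)) (Apoly b (j : ℕ)), mul_comm]
    rw [hsum, hr]
    by_cases h0 : i = 0
    · rw [if_pos h0, if_pos (by simp [h0])]
    · rw [if_neg (show ¬ ((i : ℕ) = 0) from fun h => h0 (Fin.ext h)), if_neg h0]
  -- apply the core lemma
  have hdne : M.det ≠ 0 := by
    rw [← hdetM]; exact hΔ (m+2) (by omega)
  have hcore := bior_core M (κ (m+1)) (κ m) y w y' w'
    (hκ (m+1)) (hκ m) hdne
    hy (by simp [hy_def, hdy0]) hw (by simp [hw_def, hdw0])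
    hy' (by simp [hy'_def, hdy'0]) hw' (by simp [hw'_def, hdw'0])
  have hyl : y (Fin.last _) = (P (m+1)).eval (a (m+1)) := by
    simp only [hy_def, Fin.val_last]
    exact hdyn
  have hwl : w (Fin.last _) = (P (m+1)).eval (b (m+1)) := by
    simp only [hw_def, Fin.val_last]
    exact hdwn
  rw [hyl, hwl, hdetN, ← hdetM] at hcore
  -- final arithmetic
  have hΔ1 : DeltaDet σ a b (m+1+1) ≠ 0 := hΔ _ (by omega)
  have hm1 : m + 1 - 1 = m := by omega
  rw [hm1]
  have hκm := hκ m
  field_simp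
  rw [show m + 1 + 1 = m + 2 from rfl] at *
  linear_combination hcore
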